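/- Let X and Y be self-dense, locally connected, compact metric spaces, let f : X → X and g : Y → Y be homeomorphisms, and let π : Y → X be a continuous surjection with f ∘ π = π ∘ g which is inner-light. If f is inner-distal, then g is inner-distal. -/

import Mathlib

open Metric Set MeasureTheory Filter Topology

/-- The proximal cell of `x` with respect to the iterates `f ^ n`, `n : ℤ`. -/
noncomputable def proximalCell {X : Type*} [MetricSpace X] (f : Equiv.Perm X) (x : X) : Set X :=
  {y | (⨅ n : ℤ, dist ((f ^ n) x) ((f ^ n) y)) = 0}

private lemma semiconj_zpow {X Y : Type*} (f : X ≃ X) (g : Y ≃ Y) (π : Y → X)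
    (hcomm : ∀ y : Y, f (π y) = π (g y)) (n : ℤ) (y : Y) :
    (f ^ n) (π y) = π ((g ^ n) y) := by
  have hinv : ∀ y : Y, f⁻¹ (π y) = π (g⁻¹ y) := by
    intro y
    have := hcomm (g⁻¹ y)
    simp only [Equiv.Perm.inv_def, Equiv.apply_symm_apply] at this
    rw [← this]
    simp [Equiv.Perm.inv_def]
  induction n using Int.induction_on generalizing y with
  | zero => simp
  | succ k ih =>
      rw [zpow_add_one, zpow_add_one]
      simp only [Equiv.Perm.mul_apply]
      rw [hcomm y, ih (g y)]
  | pred k ih =>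
      rw [show (-(k:ℤ) - 1) = (-(k:ℤ)) - 1 from rfl, zpow_sub_one, zpow_sub_one]
      simp only [Equiv.Perm.mul_apply]
      rw [hinv y, ih (g⁻¹ y)]

/-- An inner-light extension of an inner-distal homeomorphism between self-dense,
locally connected, compact metric spaces is inner-distal. -/
theorem stmt2 {X Y : Type*} [MetricSpace X] [CompactSpace X] [LocallyConnectedSpace X]
    [MetricSpace Y] [CompactSpace Y] [LocallyConnectedSpace Y]
    (hX : ∀ x : X, ¬ IsOpen ({x} : Set X))
    (hY : ∀ y : Y, ¬ IsOpen ({y} : Set Y))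
    (f : X ≃ₜ X) (g : Y ≃ₜ Y) (π : Y → X)
    (hπc : Continuous π) (hπs : Function.Surjective π)
    (hcomm : ∀ y : Y, f (π y) = π (g y))
    (hlight : ∀ C : Set Y, IsCompact C → IsConnected C →
      interior (π '' C) = (∅ : Set X) → interior C = ∅)
    (hf : ∀ x : X, interior (proximalCell f.toEquiv x) = ∅) :
    ∀ y : Y, interior (proximalCell g.toEquiv y) = ∅ := by
  intro y
  by_contra hne
  -- π is uniformly continuous
  have hπu : UniformContinuous π := CompactSpace.uniformContinuous_of_continuous hπc
  -- proximality is pushed forward by π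
  have hpush : ∀ y' : Y, y' ∈ proximalCell g.toEquiv y → π y' ∈ proximalCell f.toEquiv (π y) := by
    intro y' hy'
    have hbdd : BddBelow (Set.range fun n : ℤ => dist ((f.toEquiv ^ n) (π y)) ((f.toEquiv ^ n) (π y'))) := by
      refine ⟨0, ?_⟩
      rintro _ ⟨n, rfl⟩
      exact dist_nonneg
    refine le_antisymm ?_ (le_ciInf fun n => dist_nonneg)
    refine le_of_forall_pos_le_add ?_
    intro ε hε
    rw [zero_add]
    obtain ⟨δ, hδ, hδε⟩ := Metric.uniformContinuous_iff.mp hπu ε hε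
    have hlt : (⨅ n : ℤ, dist ((g.toEquiv ^ n) y) ((g.toEquiv ^ n) y')) < δ := by
      rw [hy']; exact hδ
    obtain ⟨n, hn⟩ := exists_lt_of_ciInf_lt hlt
    have hdist : dist ((f.toEquiv ^ n) (π y)) ((f.toEquiv ^ n) (π y')) < ε := by
      rw [semiconj_zpow f.toEquiv g.toEquiv π hcomm n y,
          semiconj_zpow f.toEquiv g.toEquiv π hcomm n y']
      exact hδε hn
    exact (ciInf_le hbdd n).trans hdist.le
  -- find a point in the interior of the proximal cell of y
  obtain ⟨u, hu⟩ := Set.nonempty_iff_ne_empty.mpr hne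
  have hUopen : IsOpen (interior (proximalCell g.toEquiv y)) := isOpen_interior
  obtain ⟨r, hr, hball⟩ := Metric.nhds_basis_closedBall.mem_iff.mp
    (hUopen.mem_nhds hu)
  set W := connectedComponentIn (Metric.ball u r) u with hWdef
  have huW : u ∈ W := mem_connectedComponentIn (Metric.mem_ball_self hr)
  have hWopen : IsOpen W := (Metric.isOpen_ball).connectedComponentIn
  set C := closure W with hCdef
  have hCcomp : IsCompact C := isClosed_closure.isCompact
  have hCconn : IsConnected C := by
    refine ⟨⟨u, subset_closure huW⟩, ?_⟩
    exact (isPreconnected_connectedComponentIn).closure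
  have hCsub : C ⊆ proximalCell g.toEquiv y := by
    have : C ⊆ Metric.closedBall u r := by
      calc C ⊆ closure (Metric.ball u r) :=
              closure_mono (connectedComponentIn_subset _ _)
        _ ⊆ Metric.closedBall u r := closure_ball_subset_closedBall
    exact fun z hz => interior_subset (hball (this hz))
  have hπC : interior (π '' C) = ∅ := by
    have hsub : π '' C ⊆ proximalCell f.toEquiv (π y) := by
      rintro _ ⟨z, hz, rfl⟩
      exact hpush z (hCsub hz)
    have := interior_mono hsub
    rw [hf (π y)] at this
    exact Set.eq_empty_iff_forall_notMem.mpr fun x hx => (this hx).elim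
  have hCint : interior C = ∅ := hlight C hCcomp hCconn hπC
  have huint : u ∈ interior W := by rw [hWopen.interior_eq]; exact huW
  have : u ∈ interior C := interior_mono subset_closure huint
  rw [hCint] at this
  exact this
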